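/- Let k be a field of characteristic 0, V a finite-dimensional k-vector space, n ≥ 1, and K a subgroup of S_n acting on the n-th tensor power V^{⊗n} by permuting tensor factors: σ•(v_1⊗⋯⊗v_n) = v_{σ⁻¹(1)}⊗⋯⊗v_{σ⁻¹(n)}. Then the dimension of the subspace of K-invariants of V^{⊗n} equals (1/|K|) Σ_{τ∈K} (dim V)^{c(τ)}, where c(τ) is the total number of cycles of the permutation τ on {1,…,n} (fixed points counted as cycles of length 1); equivalently, it equals the cycle index polynomial P_K evaluated at (dim V, dim V, …, dim V). -/

import Mathlib

open Finset
open scoped TensorProduct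

/-- The submodule of `K`-invariants of the `n`-th tensor power `V^{⊗n}`, where a subgroup
`K ≤ S_n` acts by permuting the tensor factors (via `PiTensorProduct.reindex`). -/
def permInvariants (k V : Type*) [Field k] [AddCommGroup V] [Module k V] (n : ℕ)
    (K : Subgroup (Equiv.Perm (Fin n))) : Submodule k (⨂[k] _ : Fin n, V) where
  carrier := {x | ∀ σ ∈ K, PiTensorProduct.reindex k (fun _ : Fin n => V) σ x = x}
  add_mem' := by
    intro x y hx hy σ hσ
    rw [map_add, hx σ hσ, hy σ hσ]
  zero_mem' := by
    intro σ hσ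
    exact map_zero _
  smul_mem' := by
    intro c x hx σ hσ
    rw [map_smul, hx σ hσ]

/-- The total number of cycles of a permutation `τ`, fixed points counted as cycles of
length 1: the number of nontrivial cycles (`τ.cycleType.card`) plus the number of fixed
points. -/
def cyclesCount {n : ℕ} (τ : Equiv.Perm (Fin n)) : ℕ :=
  τ.cycleType.card + (Finset.univ.filter fun x : Fin n => τ x = x).card

/-! ### Counting functions fixed by a permutation -/

private def sameCycleSetoid {α : Type*} (σ : Equiv.Perm α) : Setoid α :=
  ⟨σ.SameCycle, ⟨fun _ => Equiv.Perm.SameCycle.refl _ _, Equiv.Perm.SameCycle.symm,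
    Equiv.Perm.SameCycle.trans⟩⟩

private lemma fixed_app {α β : Type*} {σ : Equiv.Perm α} {f : α → β}
    (hf : ∀ x, f (σ x) = f x) : ∀ (i : ℤ) (x : α), f ((σ ^ i) x) = f x := by
  intro i
  induction i using Int.induction_on with
  | zero => simp
  | succ n ih =>
    intro x
    have : (σ ^ ((n : ℤ) + 1)) x = (σ ^ (n : ℤ)) (σ x) := by
      rw [zpow_add_one, Equiv.Perm.mul_apply]
    rw [this, ih, hf]
  | pred n ih =>
    intro x
    have : (σ ^ ((-n : ℤ) - 1)) x = (σ ^ (-n : ℤ)) (σ⁻¹ x) := by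
      rw [zpow_sub_one, Equiv.Perm.mul_apply]
    have h2 : f (σ⁻¹ x) = f x := by
      conv_rhs => rw [← (Equiv.Perm.eq_inv_iff_eq.mp rfl : σ (σ⁻¹ x) = x), hf]
    rw [this, ih, h2]

private def fixedFunEquiv {α : Type*} (σ : Equiv.Perm α) (β : Type*) :
    {f : α → β // ∀ x, f (σ x) = f x} ≃ (Quotient (sameCycleSetoid σ) → β) where
  toFun f := Quotient.lift f.1 (by
    rintro a b ⟨i, hi⟩
    rw [← hi]
    exact (fixed_app f.2 i a).symm)
  invFun g := ⟨fun x => g ⟦x⟧, fun x => by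
    have : (⟦σ x⟧ : Quotient (sameCycleSetoid σ)) = ⟦x⟧ :=
      Quotient.sound ⟨-1, by simp⟩
    simp only [this]⟩
  left_inv f := Subtype.ext rfl
  right_inv g := funext fun q => Quotient.inductionOn q fun x => rfl

private noncomputable def quotEquiv {α : Type*} [Fintype α] [DecidableEq α] (σ : Equiv.Perm α) :
    Quotient (sameCycleSetoid σ) ≃
      ({x : α // σ x = x} ⊕ {c : Equiv.Perm α // c ∈ σ.cycleFactorsFinset}) := by
  apply Equiv.ofBijective (f := fun q => Quotient.lift
    (fun x => if h : σ x = x then Sum.inl ⟨x, h⟩ else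
      Sum.inr ⟨σ.cycleOf x, Equiv.Perm.cycleOf_mem_cycleFactorsFinset_iff.2
        (Equiv.Perm.mem_support.2 h)⟩)
    (by
      intro a b hab
      by_cases ha : σ a = a
      · have : b = a := by
          obtain ⟨i, hi⟩ := hab
          rw [← hi, Equiv.Perm.zpow_apply_eq_self_of_apply_eq_self ha]
        subst this
        rfl
      · have hb : ¬ σ b = b := fun hb => ha (by
          obtain ⟨i, hi⟩ := hab.symm
          rw [← hi, Equiv.Perm.zpow_apply_eq_self_of_apply_eq_self hb]
          exact hb)
        simp only [dif_neg ha, dif_neg hb]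
        congr 1
        exact Subtype.ext hab.cycleOf_eq) q)
  constructor
  · intro q1 q2
    refine Quotient.inductionOn₂ q1 q2 fun x y h => ?_
    simp only [Quotient.lift_mk] at h
    by_cases hx : σ x = x
    · by_cases hy : σ y = y
      · simp only [dif_pos hx, dif_pos hy] at h
        cases h
        rfl
      · simp only [dif_pos hx, dif_neg hy] at h
        exact absurd h (by simp)
    · by_cases hy : σ y = y
      · simp only [dif_neg hx, dif_pos hy] at h
        exact absurd h (by simp)
      · simp only [dif_neg hx, dif_neg hy] at h
        have hco : σ.cycleOf x = σ.cycleOf y := congrArg Subtype.val (Sum.inr.inj h)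
        have hy' : y ∈ (σ.cycleOf x).support := by
          rw [hco]
          exact Equiv.Perm.mem_support_cycleOf_iff.2
            ⟨Equiv.Perm.SameCycle.refl _ _, Equiv.Perm.mem_support.2 hy⟩
        exact Quotient.sound (Equiv.Perm.mem_support_cycleOf_iff.1 hy').1
  · rintro (⟨x, hx⟩ | ⟨c, hc⟩)
    · exact ⟨⟦x⟧, by simp [hx]⟩
    · have hcyc : c.IsCycle := (Equiv.Perm.mem_cycleFactorsFinset_iff.1 hc).1
      obtain ⟨x, hx, -⟩ := hcyc
      have hxs : x ∈ c.support := Equiv.Perm.mem_support.2 hx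
      have hσx : ¬ σ x = x := by
        have := (Equiv.Perm.mem_cycleFactorsFinset_iff.1 hc).2 x hxs
        rw [← this]; exact hx
      refine ⟨⟦x⟧, ?_⟩
      simp only [Quotient.lift_mk, dif_neg hσx]
      congr 1
      exact Subtype.ext (Equiv.Perm.cycle_is_cycleOf hxs hc).symm

private lemma card_fixedFun {α : Type*} [Fintype α] [DecidableEq α] (σ : Equiv.Perm α)
    (β : Type*) [Fintype β] :
    Nat.card {f : α → β // ∀ x, f (σ x) = f x} =
      Fintype.card β ^ (σ.cycleType.card + (Finset.univ.filter fun x => σ x = x).card) := by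
  rw [Nat.card_congr (fixedFunEquiv σ β), Nat.card_fun, Nat.card_congr (quotEquiv σ),
    Nat.card_sum, Nat.card_eq_fintype_card, Nat.card_eq_fintype_card, Nat.card_eq_fintype_card,
    Fintype.card_subtype, Fintype.card_coe, Equiv.Perm.cycleType_def, Multiset.card_map,
    add_comm (Finset.filter _ _).card]
  rfl

/-! ### A basis of the tensor power -/

section TB

open PiTensorProduct

variable (k V : Type*) [Field k] [AddCommGroup V] [Module k V] [FiniteDimensional k V] (n : ℕ)

private noncomputable abbrev bV := Module.finBasis k V

private noncomputable def PhiMap : (⨂[k] _ : Fin n, V) →ₗ[k]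
    ((Fin n → Fin (Module.finrank k V)) →₀ k) :=
  (Finsupp.linearEquivFunOnFinite k k _).symm.toLinearMap ∘ₗ
    LinearMap.pi fun g => PiTensorProduct.lift
      ((MultilinearMap.mkPiAlgebra k (Fin n) k).compLinearMap fun i => (bV k V).coord (g i))

private noncomputable def PsiMap : ((Fin n → Fin (Module.finrank k V)) →₀ k) →ₗ[k]
    (⨂[k] _ : Fin n, V) :=
  Finsupp.linearCombination k fun g => tprod k fun i => bV k V (g i)

private lemma PhiMap_tprod (v : Fin n → V) :
    PhiMap k V n (tprod k v) = (Finsupp.linearEquivFunOnFinite k k _).symm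
      (fun g => ∏ i, (bV k V).repr (v i) (g i)) := by
  simp only [PhiMap, LinearMap.comp_apply, LinearEquiv.coe_toLinearMap]
  congr 1
  funext g
  simp [Module.Basis.coord_apply]

private lemma PsiMap_fun (h : (Fin n → Fin (Module.finrank k V)) → k) :
    PsiMap k V n ((Finsupp.linearEquivFunOnFinite k k _).symm h) =
      ∑ g, h g • tprod k fun i => bV k V (g i) := by
  rw [PsiMap, Finsupp.linearCombination_apply, Finsupp.sum_fintype]
  · simp [Finsupp.linearEquivFunOnFinite]
  · intro g; exact zero_smul _ _

private lemma tprod_expand (v : Fin n → V) :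
    tprod k v = ∑ g : Fin n → Fin (Module.finrank k V),
      (∏ i, (bV k V).repr (v i) (g i)) • tprod k fun i => bV k V (g i) := by
  have hv : tprod k v = tprod k fun i => ∑ j, (bV k V).repr (v i) j • bV k V j := by
    congr 1
    exact funext fun i => ((bV k V).sum_repr (v i)).symm
  rw [hv, MultilinearMap.map_sum]
  exact Finset.sum_congr rfl fun g _ => MultilinearMap.map_smul_univ _ _ _

private lemma Psi_comp_Phi : (PsiMap k V n) ∘ₗ (PhiMap k V n) = LinearMap.id := by
  refine PiTensorProduct.ext (MultilinearMap.ext fun v => ?_)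
  simp only [LinearMap.compMultilinearMap_apply, LinearMap.comp_apply, LinearMap.id_apply]
  rw [PhiMap_tprod, PsiMap_fun, ← tprod_expand]

private lemma Phi_tprod_basis (g : Fin n → Fin (Module.finrank k V)) :
    PhiMap k V n (tprod k fun i => bV k V (g i)) = Finsupp.single g 1 := by
  apply (Finsupp.linearEquivFunOnFinite k k _).injective
  rw [PhiMap_tprod, LinearEquiv.apply_symm_apply]
  funext r
  have : (Finsupp.linearEquivFunOnFinite k k _) (Finsupp.single g (1:k)) =
      ⇑(Finsupp.single g (1:k)) := rfl
  rw [this]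
  simp only [Module.Basis.repr_self, Finsupp.single_apply, Finset.prod_boole]
  by_cases h : g = r
  · subst h; simp
  · rw [if_neg h, if_neg]
    intro hall
    exact h (funext fun i => hall i (Finset.mem_univ i))

private lemma Phi_comp_Psi : (PhiMap k V n) ∘ₗ (PsiMap k V n) = LinearMap.id := by
  refine Finsupp.lhom_ext fun g r => ?_
  simp only [LinearMap.comp_apply, LinearMap.id_apply, PsiMap,
    Finsupp.linearCombination_single, map_smul, Phi_tprod_basis]
  rw [Finsupp.smul_single, smul_eq_mul, mul_one]

private noncomputable def tensorBasis :
    Module.Basis (Fin n → Fin (Module.finrank k V)) k (⨂[k] _ : Fin n, V) :=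
  Module.Basis.ofRepr (LinearEquiv.ofLinear (PhiMap k V n) (PsiMap k V n)
    (Phi_comp_Psi k V n) (Psi_comp_Phi k V n))

private lemma tensorBasis_apply (g : Fin n → Fin (Module.finrank k V)) :
    tensorBasis k V n g = tprod k fun i => bV k V (g i) := by
  apply (tensorBasis k V n).repr.injective
  rw [Module.Basis.repr_self]
  exact (Phi_tprod_basis k V n g).symm

private instance : Module.Finite k (⨂[k] _ : Fin n, V) :=
  Module.Finite.of_basis (tensorBasis k V n)

/-! ### Trace of the permutation action -/

private lemma trace_reindex (σ : Equiv.Perm (Fin n)) :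
    LinearMap.trace k (⨂[k] _ : Fin n, V)
        (PiTensorProduct.reindex k (fun _ : Fin n => V) σ).toLinearMap =
      ((Module.finrank k V ^ cyclesCount σ : ℕ) : k) := by
  classical
  set B := tensorBasis k V n with hB
  set L := (PiTensorProduct.reindex k (fun _ : Fin n => V) σ).toLinearMap with hLdef
  have hL : ∀ g : Fin n → Fin (Module.finrank k V), L (B g) = B (fun i => g (σ⁻¹ i)) := by
    intro g
    rw [hLdef, hB, LinearEquiv.coe_toLinearMap, tensorBasis_apply, reindex_tprod,
      tensorBasis_apply]
    rfl
  have htr : LinearMap.trace k _ L = ∑ g, (B.repr (L (B g))) g := by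
    rw [LinearMap.trace_eq_matrix_trace k B, Matrix.trace]
    refine Finset.sum_congr rfl fun g _ => ?_
    rw [Matrix.diag_apply, LinearMap.toMatrix_apply]
  rw [htr]
  have hg : ∀ g : Fin n → Fin (Module.finrank k V),
      (B.repr (L (B g))) g = if (∀ x, g (σ x) = g x) then (1:k) else 0 := by
    intro g
    rw [hL, Module.Basis.repr_self, Finsupp.single_apply]
    congr 1
    simp only [eq_iff_iff]
    constructor
    · intro h x
      have := congrFun h (σ x)
      simpa using this.symm
    · intro h
      funext y
      conv_rhs => rw [← (Equiv.Perm.eq_inv_iff_eq.mp rfl : σ (σ⁻¹ y) = y), h]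
  rw [Finset.sum_congr rfl fun g _ => hg g, Finset.sum_boole]
  have hcount : (Finset.univ.filter fun g : Fin n → Fin (Module.finrank k V) =>
      ∀ x, g (σ x) = g x).card = Module.finrank k V ^ cyclesCount σ := by
    rw [← Fintype.card_subtype, ← Nat.card_eq_fintype_card, card_fixedFun, Fintype.card_fin]
    rfl
  rw [hcount]

end TB

/-! ### Main theorem -/

theorem statement6 (k V : Type*) [Field k] [CharZero k] [AddCommGroup V] [Module k V]
    [FiniteDimensional k V] (n : ℕ) (hn : 1 ≤ n)
    (K : Subgroup (Equiv.Perm (Fin n))) [Fintype K] :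
    (Module.finrank k (permInvariants k V n K) : ℚ) =
      (Fintype.card K : ℚ)⁻¹ *
        ∑ τ : K, (Module.finrank k V : ℚ) ^ cyclesCount (τ : Equiv.Perm (Fin n)) := by
  classical
  set d := Module.finrank k V with hd
  set P := permInvariants k V n K with hP
  set L : Equiv.Perm (Fin n) → Module.End k (⨂[k] _ : Fin n, V) :=
    fun σ => (PiTensorProduct.reindex k (fun _ : Fin n => V) σ).toLinearMap with hLdef
  have hc : (Fintype.card K : k) ≠ 0 := Nat.cast_ne_zero.mpr Fintype.card_ne_zero
  set π : Module.End k (⨂[k] _ : Fin n, V) :=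
    (Fintype.card K : k)⁻¹ • ∑ τ : K, L (τ : Equiv.Perm (Fin n)) with hπdef
  have happly : ∀ x, π x = (Fintype.card K : k)⁻¹ •
      ∑ τ : K, L (τ : Equiv.Perm (Fin n)) x := by
    intro x
    rw [hπdef, LinearMap.smul_apply, LinearMap.sum_apply]
  have hproj : LinearMap.IsProj P π := by
    constructor
    · intro x σ hσ
      rw [happly, map_smul, map_sum]
      congr 1
      have hterm : ∀ τ : K, PiTensorProduct.reindex k (fun _ : Fin n => V) σ
          (L (τ : Equiv.Perm (Fin n)) x) =
          L (((⟨σ, hσ⟩ * τ : K) : Equiv.Perm (Fin n))) x := by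
        intro τ
        exact PiTensorProduct.reindex_reindex _ _ _
      rw [Finset.sum_congr rfl fun τ _ => hterm τ]
      exact Equiv.sum_comp (Equiv.mulLeft (⟨σ, hσ⟩ : K))
        (fun τ : K => L (τ : Equiv.Perm (Fin n)) x)
    · intro x hx
      rw [happly]
      have : ∀ τ : K, L (τ : Equiv.Perm (Fin n)) x = x := fun τ => hx τ τ.2
      rw [Finset.sum_congr rfl fun τ _ => this τ, Finset.sum_const, Finset.card_univ,
        ← Nat.cast_smul_eq_nsmul k, smul_smul, inv_mul_cancel₀ hc, one_smul]
  have htrace : (Module.finrank k P : k) = LinearMap.trace k _ π :=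
    (LinearMap.IsProj.trace hproj).symm
  have htraceval : LinearMap.trace k _ π =
      (Fintype.card K : k)⁻¹ * ((∑ τ : K, d ^ cyclesCount (τ : Equiv.Perm (Fin n)) : ℕ) : k) := by
    rw [hπdef, map_smul, map_sum, smul_eq_mul]
    congr 1
    rw [Nat.cast_sum]
    exact Finset.sum_congr rfl fun τ _ => trace_reindex k V n _
  have hNat : Fintype.card K * Module.finrank k P =
      ∑ τ : K, d ^ cyclesCount (τ : Equiv.Perm (Fin n)) := by
    have h1 : ((Fintype.card K * Module.finrank k P : ℕ) : k) =
        ((∑ τ : K, d ^ cyclesCount (τ : Equiv.Perm (Fin n)) : ℕ) : k) := by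
      rw [Nat.cast_mul, htrace, htraceval, ← mul_assoc, mul_inv_cancel₀ hc, one_mul]
    exact Nat.cast_injective h1
  have hcQ : (Fintype.card K : ℚ) ≠ 0 := Nat.cast_ne_zero.mpr Fintype.card_ne_zero
  have hQ : (Fintype.card K : ℚ) * (Module.finrank k P : ℚ) =
      ∑ τ : K, (d : ℚ) ^ cyclesCount (τ : Equiv.Perm (Fin n)) := by
    have := congrArg (fun m : ℕ => (m : ℚ)) hNat
    push_cast at this
    exact this
  rw [← hQ, ← mul_assoc, inv_mul_cancel₀ hcQ, one_mul]
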